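/- Fix s>1, a bounded open set U ⊆ ℝ^d, 1≤p<∞ and h>0. Then D^{(s)}_{L^p,2^s h}(U) ⊆ D^{(s)}_{L^∞,h}(U) and the inclusion is continuous: there is a constant C>0 such that sup_{β∈ℕ^d} h^{|β|}‖D^βφ‖_{L^∞(U)}/β!^s ≤ C (Σ_{γ∈ℕ^d} (2^s h)^{|γ|p}‖D^γφ‖_{L^p(U)}^p/γ!^{ps})^{1/p} for all φ ∈ D^{(s)}_{L^p,2^s h}(U). Consequently the spaces D^{(s)}_{L^p}(U), 1≤p<∞, and Ḃ^{(s)}(U) are all isomorphic to each other as locally convex spaces. -/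

import Mathlib

open MeasureTheory Filter Set
open scoped BigOperators ENNReal NNReal Topology

noncomputable section

/-- The order `|α|` of a multi-index `α`. -/
def mOrder {d : ℕ} (α : Fin d → ℕ) : ℕ := ∑ i, α i

/-- The factorial `α!` of a multi-index `α`. -/
def mFact {d : ℕ} (α : Fin d → ℕ) : ℕ := ∏ i, Nat.factorial (α i)

variable {d : ℕ} {F : Type*} [NormedAddCommGroup F] [NormedSpace ℝ F]

/-- First-order partial derivative `∂_i`. -/
def pd (i : Fin d) (f : (Fin d → ℝ) → F) : (Fin d → ℝ) → F :=
  fun x => fderiv ℝ f x (Pi.single i 1)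

/-- Iterated partial derivative `∂_i^n`. -/
def pdPow (i : Fin d) : ℕ → ((Fin d → ℝ) → F) → ((Fin d → ℝ) → F)
  | 0 => id
  | n + 1 => fun f => pd i (pdPow i n f)

/-- Iterated partial derivative `∂^α` for a multi-index `α`. -/
def pdm (α : Fin d → ℕ) (f : (Fin d → ℝ) → F) : (Fin d → ℝ) → F :=
  (List.finRange d).foldr (fun i g => pdPow i (α i) g) f

/-- The operator `D^α = i^{-|α|} ∂^α` for complex-valued functions. -/
def Dm (α : Fin d → ℕ) (f : (Fin d → ℝ) → ℂ) : (Fin d → ℝ) → ℂ :=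
  fun x => (-Complex.I) ^ (mOrder α) * pdm α f x

/-- `φ` is a Beurling–Gevrey test function of class `(s)` on `U`. -/
def IsGevreyTest (s : ℝ) (U : Set (Fin d → ℝ)) (φ : (Fin d → ℝ) → F) : Prop :=
  ContDiff ℝ (⊤ : ℕ∞) φ ∧ HasCompactSupport φ ∧ tsupport φ ⊆ U ∧
    ∀ h : ℝ, 0 < h → ∃ C : ℝ, ∀ (α : Fin d → ℕ) (x : Fin d → ℝ),
      ‖pdm α φ x‖ ≤ C * h ^ (mOrder α) * (mFact α : ℝ) ^ s

/-- The `ℓ^p`-type norm of a family of extended reals (sup for `p = ∞`). -/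
def seqLpNorm {ι : Type*} (p : ℝ≥0∞) (w : ι → ℝ≥0∞) : ℝ≥0∞ :=
  if p = ∞ then ⨆ i, w i else (∑' i, (w i) ^ p.toReal) ^ (1 / p.toReal)

/-- The norm of the space `D^s_{L^p,h}(U)`:
`(∑_α h^{p|α|} ‖D^α φ‖_{L^p(U)}^p / α!^{ps})^{1/p}` (sup over `α` when `p = ∞`). -/
def gNorm (s h : ℝ) (p : ℝ≥0∞) (U : Set (Fin d → ℝ)) (φ : (Fin d → ℝ) → F) : ℝ≥0∞ :=
  seqLpNorm p (fun α : Fin d → ℕ =>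
    ENNReal.ofReal (h ^ (mOrder α) / (mFact α : ℝ) ^ s) *
      eLpNorm (pdm α φ) p (volume.restrict U))

/-- Membership in `D^{(s)}_{L^p,h}(U)`, the closure of `D^{(s)}(U)` in `D^s_{L^p,h}(U)`. -/
def MemD (s h : ℝ) (p : ℝ≥0∞) (U : Set (Fin d → ℝ)) (φ : (Fin d → ℝ) → F) : Prop :=
  ContDiffOn ℝ (⊤ : ℕ∞) φ U ∧ gNorm s h p U φ < ⊤ ∧
    ∀ ε : ℝ, 0 < ε → ∃ ψ : (Fin d → ℝ) → F, IsGevreyTest s U ψ ∧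
      gNorm s h p U (φ - ψ) < ENNReal.ofReal ε

/-- Membership in `Ḃ^{(s)}(U)`, the closure of `D^{(s)}(U)` with respect to the
family of norms `p_h`, `h > 0` (the norms being directed, closure with respect to the
whole family amounts to approximability in each norm separately). -/
def MemBdot (s : ℝ) (U : Set (Fin d → ℝ)) (φ : (Fin d → ℝ) → F) : Prop :=
  ContDiffOn ℝ (⊤ : ℕ∞) φ U ∧ (∀ h : ℝ, 0 < h → gNorm s h ∞ U φ < ⊤) ∧
    ∀ h ε : ℝ, 0 < h → 0 < ε → ∃ ψ : (Fin d → ℝ) → F, IsGevreyTest s U ψ ∧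
      gNorm s h ∞ U (φ - ψ) < ENNReal.ofReal ε

/-- A continuous linear functional on the Banach space `D^{(s)}_{L^q,h}(U)`. -/
def IsDualD (s h : ℝ) (q : ℝ≥0∞) (U : Set (Fin d → ℝ)) (T : ((Fin d → ℝ) → ℂ) → ℂ) : Prop :=
  (∀ φ ψ, MemD s h q U φ → MemD s h q U ψ → T (φ + ψ) = T φ + T ψ) ∧
  (∀ (c : ℂ) (φ), MemD s h q U φ → T (c • φ) = c * T φ) ∧
  ∃ M : ℝ, ∀ φ, MemD s h q U φ → ‖T φ‖ ≤ M * (gNorm s h q U φ).toReal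

/-- A continuous linear map from `Ḃ^{(s)}(U)` into a Banach space `E` (over `ℂ`). -/
def IsContLinBdot (s : ℝ) (U : Set (Fin d → ℝ)) {E : Type*} [NormedAddCommGroup E]
    [NormedSpace ℂ E] (f : ((Fin d → ℝ) → ℂ) → E) : Prop :=
  (∀ φ ψ, MemBdot s U φ → MemBdot s U ψ → f (φ + ψ) = f φ + f ψ) ∧
  (∀ (c : ℂ) (φ), MemBdot s U φ → f (c • φ) = c • f φ) ∧
  ∃ h M : ℝ, 0 < h ∧ ∀ φ, MemBdot s U φ → ‖f φ‖ ≤ M * (gNorm s h ∞ U φ).toReal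

section Aux

variable {d : ℕ} {F : Type*} [NormedAddCommGroup F] [NormedSpace ℝ F]

local notation "∞" => (⊤ : ℕ∞)

lemma contDiff_pd {f : (Fin d → ℝ) → F} (hf : ContDiff ℝ ∞ f) (i : Fin d) :
    ContDiff ℝ ∞ (pd i f) := by
  have h1 : ContDiff ℝ ∞ (fderiv ℝ f) := hf.fderiv_right (m := ∞) (by simp)
  exact h1.clm_apply contDiff_const

lemma pd_congr_nhds {f g : (Fin d → ℝ) → F} {x : Fin d → ℝ} (h : f =ᶠ[nhds x] g) (i : Fin d) :
    pd i f x = pd i g x := by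
  simp only [pd, h.fderiv_eq]

lemma support_pd_subset (f : (Fin d → ℝ) → F) (i : Fin d) :
    Function.support (pd i f) ⊆ tsupport f := by
  intro x hx
  by_contra hx'
  have h0 : f =ᶠ[nhds x] 0 := notMem_tsupport_iff_eventuallyEq.mp hx'
  have h1 : pd i f x = pd i (0 : (Fin d → ℝ) → F) x := pd_congr_nhds h0 i
  have h2 : pd i (0 : (Fin d → ℝ) → F) x = 0 := by
    simp only [pd]
    rw [show (0 : (Fin d → ℝ) → F) = (fun _ => (0:F)) from rfl, fderiv_const_apply]
    simp
  exact hx (h1.trans h2)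

lemma tsupport_pd_subset (f : (Fin d → ℝ) → F) (i : Fin d) :
    tsupport (pd i f) ⊆ tsupport f :=
  closure_minimal (support_pd_subset f i) (isClosed_tsupport f)

lemma hasCompactSupport_pd {f : (Fin d → ℝ) → F} (hf : HasCompactSupport f) (i : Fin d) :
    HasCompactSupport (pd i f) :=
  IsCompact.of_isClosed_subset hf (isClosed_tsupport _) (tsupport_pd_subset f i)

lemma pd_neg (f : (Fin d → ℝ) → F) (i : Fin d) : pd i (-f) = -(pd i f) := by
  funext x
  simp only [pd, Pi.neg_apply]
  rw [show (-f) = (fun y => -(f y)) from rfl, fderiv_fun_neg]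
  simp

lemma pd_sub {f g : (Fin d → ℝ) → F} (hf : Differentiable ℝ f) (hg : Differentiable ℝ g)
    (i : Fin d) : pd i (f - g) = pd i f - pd i g := by
  funext x
  simp only [pd, Pi.sub_apply]
  rw [show (f - g) = (fun y => f y - g y) from rfl, fderiv_fun_sub (hf x) (hg x)]
  simp

lemma pd_comm {f : (Fin d → ℝ) → F} (hf : ContDiff ℝ ∞ f) (i j : Fin d) :
    pd i (pd j f) = pd j (pd i f) := by
  funext x
  have hdf : ContDiff ℝ ∞ (fderiv ℝ f) := hf.fderiv_right (m := ∞) (by simp)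
  have h1 : ∀ y, HasFDerivAt f (fderiv ℝ f y) y := fun y =>
    (hf.differentiable (by simp) y).hasFDerivAt
  have h2 : HasFDerivAt (fderiv ℝ f) (fderiv ℝ (fderiv ℝ f) x) x :=
    ((hdf.differentiable (by simp)) x).hasFDerivAt
  have hsymm := second_derivative_symmetric h1 h2 (Pi.single i 1) (Pi.single j 1)
  have hc : ∀ (v : Fin d → ℝ) (y : Fin d → ℝ),
      fderiv ℝ (fun z => fderiv ℝ f z v) y = (fderiv ℝ (fderiv ℝ f) y).flip v := by
    intro v y
    have hd : DifferentiableAt ℝ (fderiv ℝ f) y := (hdf.differentiable (by simp)) y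
    have := fderiv_clm_apply (𝕜 := ℝ) (c := fderiv ℝ f) (u := fun _ => v) hd
      (differentiableAt_const v)
    simpa [fderiv_const] using this
  show fderiv ℝ (fun y => fderiv ℝ f y (Pi.single j 1)) x (Pi.single i 1)
      = fderiv ℝ (fun y => fderiv ℝ f y (Pi.single i 1)) x (Pi.single j 1)
  rw [hc, hc]
  simpa using hsymm

end Aux
section Aux2

variable {d : ℕ} {F : Type*} [NormedAddCommGroup F] [NormedSpace ℝ F]

local notation "∞" => (⊤ : ℕ∞)

lemma contDiff_pdPow {f : (Fin d → ℝ) → F} (hf : ContDiff ℝ ∞ f) (i : Fin d) (n : ℕ) :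
    ContDiff ℝ ∞ (pdPow i n f) := by
  induction n with
  | zero => exact hf
  | succ n ih => exact contDiff_pd ih i

lemma tsupport_pdPow_subset (f : (Fin d → ℝ) → F) (i : Fin d) (n : ℕ) :
    tsupport (pdPow i n f) ⊆ tsupport f := by
  induction n with
  | zero => exact subset_rfl
  | succ n ih => exact (tsupport_pd_subset _ i).trans ih

lemma hasCompactSupport_pdPow {f : (Fin d → ℝ) → F} (hf : HasCompactSupport f) (i : Fin d)
    (n : ℕ) : HasCompactSupport (pdPow i n f) :=
  IsCompact.of_isClosed_subset hf (isClosed_tsupport _) (tsupport_pdPow_subset f i n)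

lemma pdPow_neg (f : (Fin d → ℝ) → F) (i : Fin d) (n : ℕ) :
    pdPow i n (-f) = -(pdPow i n f) := by
  induction n with
  | zero => rfl
  | succ n ih =>
    show pd i (pdPow i n (-f)) = _
    rw [ih, pd_neg]
    rfl

lemma pdPow_sub {f g : (Fin d → ℝ) → F} (hf : ContDiff ℝ ∞ f) (hg : ContDiff ℝ ∞ g)
    (i : Fin d) (n : ℕ) : pdPow i n (f - g) = pdPow i n f - pdPow i n g := by
  induction n with
  | zero => rfl
  | succ n ih =>
    show pd i (pdPow i n (f - g)) = pd i (pdPow i n f) - pd i (pdPow i n g)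
    rw [ih, pd_sub ((contDiff_pdPow hf i n).differentiable (by simp))
      ((contDiff_pdPow hg i n).differentiable (by simp))]

lemma pd_pdPow_comm {f : (Fin d → ℝ) → F} (hf : ContDiff ℝ ∞ f) (i j : Fin d) (n : ℕ) :
    pd i (pdPow j n f) = pdPow j n (pd i f) := by
  induction n with
  | zero => rfl
  | succ n ih =>
    show pd i (pd j (pdPow j n f)) = pd j (pdPow j n (pd i f))
    rw [pd_comm (contDiff_pdPow hf j n) i j, ih]

lemma pdPow_add (f : (Fin d → ℝ) → F) (i : Fin d) (m n : ℕ) :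
    pdPow i (m + n) f = pdPow i m (pdPow i n f) := by
  induction m with
  | zero => simp [pdPow]
  | succ m ih =>
    have e : m + 1 + n = (m + n) + 1 := by omega
    rw [e]
    show pd i (pdPow i (m + n) f) = pdPow i (m + 1) (pdPow i n f)
    rw [ih]
    rfl

/-- Auxiliary: `pdm` along a list of coordinates. -/
def pdmL (α : Fin d → ℕ) (l : List (Fin d)) (f : (Fin d → ℝ) → F) : (Fin d → ℝ) → F :=
  l.foldr (fun i g => pdPow i (α i) g) f

lemma pdm_eq_pdmL (α : Fin d → ℕ) (f : (Fin d → ℝ) → F) :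
    pdm α f = pdmL α (List.finRange d) f := rfl

@[simp] lemma pdmL_nil (α : Fin d → ℕ) (f : (Fin d → ℝ) → F) : pdmL α [] f = f := rfl

lemma pdmL_cons (α : Fin d → ℕ) (i : Fin d) (l : List (Fin d)) (f : (Fin d → ℝ) → F) :
    pdmL α (i :: l) f = pdPow i (α i) (pdmL α l f) := rfl

lemma contDiff_pdmL {f : (Fin d → ℝ) → F} (hf : ContDiff ℝ ∞ f) (α : Fin d → ℕ)
    (l : List (Fin d)) : ContDiff ℝ ∞ (pdmL α l f) := by
  induction l with
  | nil => exact hf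
  | cons i t ih => exact contDiff_pdPow ih i (α i)

lemma contDiff_pdm {f : (Fin d → ℝ) → F} (hf : ContDiff ℝ ∞ f) (α : Fin d → ℕ) :
    ContDiff ℝ ∞ (pdm α f) := contDiff_pdmL hf α _

lemma tsupport_pdmL_subset (f : (Fin d → ℝ) → F) (α : Fin d → ℕ) (l : List (Fin d)) :
    tsupport (pdmL α l f) ⊆ tsupport f := by
  induction l with
  | nil => exact subset_rfl
  | cons i t ih => exact (tsupport_pdPow_subset _ i (α i)).trans ih

lemma tsupport_pdm_subset (f : (Fin d → ℝ) → F) (α : Fin d → ℕ) :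
    tsupport (pdm α f) ⊆ tsupport f := tsupport_pdmL_subset f α _

lemma hasCompactSupport_pdm {f : (Fin d → ℝ) → F} (hf : HasCompactSupport f) (α : Fin d → ℕ) :
    HasCompactSupport (pdm α f) :=
  IsCompact.of_isClosed_subset hf (isClosed_tsupport _) (tsupport_pdm_subset f α)

lemma pdmL_neg (f : (Fin d → ℝ) → F) (α : Fin d → ℕ) (l : List (Fin d)) :
    pdmL α l (-f) = -(pdmL α l f) := by
  induction l with
  | nil => rfl
  | cons i t ih => rw [pdmL_cons, ih, pdPow_neg, pdmL_cons]

lemma pdm_neg (f : (Fin d → ℝ) → F) (α : Fin d → ℕ) : pdm α (-f) = -(pdm α f) :=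
  pdmL_neg f α _

lemma pdmL_sub {f g : (Fin d → ℝ) → F} (hf : ContDiff ℝ ∞ f) (hg : ContDiff ℝ ∞ g)
    (α : Fin d → ℕ) (l : List (Fin d)) : pdmL α l (f - g) = pdmL α l f - pdmL α l g := by
  induction l with
  | nil => rfl
  | cons i t ih =>
    rw [pdmL_cons, ih, pdPow_sub (contDiff_pdmL hf α t) (contDiff_pdmL hg α t), pdmL_cons,
      pdmL_cons]

lemma pdm_sub {f g : (Fin d → ℝ) → F} (hf : ContDiff ℝ ∞ f) (hg : ContDiff ℝ ∞ g)
    (α : Fin d → ℕ) : pdm α (f - g) = pdm α f - pdm α g := pdmL_sub hf hg α _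

lemma pd_pdmL_comm {f : (Fin d → ℝ) → F} (hf : ContDiff ℝ ∞ f) (α : Fin d → ℕ) (i : Fin d)
    (l : List (Fin d)) : pd i (pdmL α l f) = pdmL α l (pd i f) := by
  induction l with
  | nil => rfl
  | cons j t ih =>
    rw [pdmL_cons, pd_pdPow_comm (contDiff_pdmL hf α t) i j (α j), ih, pdmL_cons]

lemma pdPow_pdmL_comm {f : (Fin d → ℝ) → F} (hf : ContDiff ℝ ∞ f) (α : Fin d → ℕ) (i : Fin d)
    (n : ℕ) (l : List (Fin d)) : pdPow i n (pdmL α l f) = pdmL α l (pdPow i n f) := by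
  induction n with
  | zero => rfl
  | succ n ih =>
    show pd i (pdPow i n (pdmL α l f)) = pdmL α l (pd i (pdPow i n f))
    rw [ih, pd_pdmL_comm (contDiff_pdPow hf i n) α i l]

lemma pdmL_add {f : (Fin d → ℝ) → F} (hf : ContDiff ℝ ∞ f) (α α' : Fin d → ℕ)
    (l : List (Fin d)) : pdmL (α + α') l f = pdmL α l (pdmL α' l f) := by
  induction l with
  | nil => rfl
  | cons i t ih =>
    rw [pdmL_cons, pdmL_cons, pdmL_cons, ih, Pi.add_apply, pdPow_add,
      pdPow_pdmL_comm (contDiff_pdmL hf α' t) α i (α' i) t]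

lemma pdm_add {f : (Fin d → ℝ) → F} (hf : ContDiff ℝ ∞ f) (α α' : Fin d → ℕ) :
    pdm (α + α') f = pdm α (pdm α' f) := pdmL_add hf α α' _

lemma pdmL_congr {α α' : Fin d → ℕ} (l : List (Fin d)) (h : ∀ j ∈ l, α j = α' j)
    (f : (Fin d → ℝ) → F) : pdmL α l f = pdmL α' l f := by
  induction l with
  | nil => rfl
  | cons i t ih =>
    rw [pdmL_cons, pdmL_cons, ih (fun j hj => h j (List.mem_cons_of_mem i hj)),
      h i List.mem_cons_self]

lemma pdmL_of_zero {α : Fin d → ℕ} (l : List (Fin d)) (h : ∀ j ∈ l, α j = 0)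
    (f : (Fin d → ℝ) → F) : pdmL α l f = f := by
  induction l with
  | nil => rfl
  | cons i t ih =>
    rw [pdmL_cons, h i List.mem_cons_self, ih (fun j hj => h j (List.mem_cons_of_mem i hj))]
    rfl

lemma pdmL_single {i : Fin d} {n : ℕ} (l : List (Fin d)) (hl : l.Nodup) (hi : i ∈ l)
    (f : (Fin d → ℝ) → F) : pdmL (Pi.single i n) l f = pdPow i n f := by
  induction l with
  | nil => simp at hi
  | cons j t ih =>
    rcases List.nodup_cons.mp hl with ⟨hjt, ht⟩
    rcases List.mem_cons.mp hi with rfl | hit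
    · rw [pdmL_cons, pdmL_of_zero t
        (fun k hk => by rw [Pi.single_eq_of_ne (fun (h : k = i) => hjt (h ▸ hk))]) f, Pi.single_eq_same]
    · have hji : j ≠ i := by rintro rfl; exact hjt hit
      rw [pdmL_cons, Pi.single_eq_of_ne hji, ih ht hit]
      rfl

lemma pdm_single (i : Fin d) (n : ℕ) (f : (Fin d → ℝ) → F) :
    pdm (Pi.single i n) f = pdPow i n f :=
  pdmL_single _ (List.nodup_finRange d) (List.mem_finRange i) f

lemma pdm_single_one (i : Fin d) (f : (Fin d → ℝ) → F) : pdm (Pi.single i 1) f = pd i f :=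
  pdm_single i 1 f

end Aux2
section Aux3

variable {d : ℕ} {F : Type*} [NormedAddCommGroup F] [NormedSpace ℝ F]

local notation "∞" => (⊤ : ℕ∞)

lemma contDiffOn_pd {U : Set (Fin d → ℝ)} (hU : IsOpen U) {f : (Fin d → ℝ) → F}
    (hf : ContDiffOn ℝ ∞ f U) (i : Fin d) : ContDiffOn ℝ ∞ (pd i f) U := by
  have h1 : ContDiffOn ℝ ∞ (fderiv ℝ f) U := hf.fderiv_of_isOpen hU (by simp)
  exact h1.clm_apply contDiffOn_const

lemma contDiffOn_pdPow {U : Set (Fin d → ℝ)} (hU : IsOpen U) {f : (Fin d → ℝ) → F}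
    (hf : ContDiffOn ℝ ∞ f U) (i : Fin d) (n : ℕ) : ContDiffOn ℝ ∞ (pdPow i n f) U := by
  induction n with
  | zero => exact hf
  | succ n ih => exact contDiffOn_pd hU ih i

lemma contDiffOn_pdmL {U : Set (Fin d → ℝ)} (hU : IsOpen U) {f : (Fin d → ℝ) → F}
    (hf : ContDiffOn ℝ ∞ f U) (α : Fin d → ℕ) (l : List (Fin d)) :
    ContDiffOn ℝ ∞ (pdmL α l f) U := by
  induction l with
  | nil => exact hf
  | cons i t ih => exact contDiffOn_pdPow hU ih i (α i)

lemma contDiffOn_pdm {U : Set (Fin d → ℝ)} (hU : IsOpen U) {f : (Fin d → ℝ) → F}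
    (hf : ContDiffOn ℝ ∞ f U) (α : Fin d → ℕ) : ContDiffOn ℝ ∞ (pdm α f) U :=
  contDiffOn_pdmL hU hf α _

lemma pd_congr_on {U : Set (Fin d → ℝ)} (hU : IsOpen U) {f g : (Fin d → ℝ) → F}
    (h : ∀ x ∈ U, f x = g x) (i : Fin d) : ∀ x ∈ U, pd i f x = pd i g x := by
  intro x hx
  exact pd_congr_nhds (Filter.eventuallyEq_of_mem (hU.mem_nhds hx) h) i

lemma pdPow_congr_on {U : Set (Fin d → ℝ)} (hU : IsOpen U) {f g : (Fin d → ℝ) → F}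
    (h : ∀ x ∈ U, f x = g x) (i : Fin d) (n : ℕ) :
    ∀ x ∈ U, pdPow i n f x = pdPow i n g x := by
  induction n with
  | zero => exact h
  | succ n ih => exact pd_congr_on hU ih i

lemma pd_sub_on {U : Set (Fin d → ℝ)} (hU : IsOpen U) {f g : (Fin d → ℝ) → F}
    (hf : ContDiffOn ℝ ∞ f U) (hg : ContDiffOn ℝ ∞ g U) (i : Fin d) :
    ∀ x ∈ U, pd i (f - g) x = pd i f x - pd i g x := by
  intro x hx
  have hfd : DifferentiableAt ℝ f x :=
    (hf.contDiffAt (hU.mem_nhds hx)).differentiableAt (by simp)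
  have hgd : DifferentiableAt ℝ g x :=
    (hg.contDiffAt (hU.mem_nhds hx)).differentiableAt (by simp)
  simp only [pd]
  rw [show (f - g) = (fun y => f y - g y) from rfl, fderiv_fun_sub hfd hgd]
  simp

lemma pdPow_sub_on {U : Set (Fin d → ℝ)} (hU : IsOpen U) {f g : (Fin d → ℝ) → F}
    (hf : ContDiffOn ℝ ∞ f U) (hg : ContDiffOn ℝ ∞ g U) (i : Fin d) (n : ℕ) :
    ∀ x ∈ U, pdPow i n (f - g) x = pdPow i n f x - pdPow i n g x := by
  induction n with
  | zero => intro x _; rfl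
  | succ n ih =>
    intro x hx
    show pd i (pdPow i n (f - g)) x = pd i (pdPow i n f) x - pd i (pdPow i n g) x
    have h1 : pd i (pdPow i n (f - g)) x = pd i (pdPow i n f - pdPow i n g) x :=
      pd_congr_on hU (fun y hy => by simpa [Pi.sub_apply] using ih y hy) i x hx
    rw [h1]
    exact pd_sub_on hU (contDiffOn_pdPow hU hf i n) (contDiffOn_pdPow hU hg i n) i x hx

lemma pdmL_sub_on {U : Set (Fin d → ℝ)} (hU : IsOpen U) {f g : (Fin d → ℝ) → F}
    (hf : ContDiffOn ℝ ∞ f U) (hg : ContDiffOn ℝ ∞ g U) (α : Fin d → ℕ) (l : List (Fin d)) :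
    ∀ x ∈ U, pdmL α l (f - g) x = pdmL α l f x - pdmL α l g x := by
  induction l with
  | nil => intro x _; rfl
  | cons i t ih =>
    intro x hx
    show pdPow i (α i) (pdmL α t (f - g)) x
        = pdPow i (α i) (pdmL α t f) x - pdPow i (α i) (pdmL α t g) x
    have h1 : pdPow i (α i) (pdmL α t (f - g)) x
        = pdPow i (α i) (pdmL α t f - pdmL α t g) x :=
      pdPow_congr_on hU (fun y hy => by simpa [Pi.sub_apply] using ih y hy) i (α i) x hx
    rw [h1]
    exact pdPow_sub_on hU (contDiffOn_pdmL hU hf α t) (contDiffOn_pdmL hU hg α t) i (α i) x hx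

lemma pdm_sub_on {U : Set (Fin d → ℝ)} (hU : IsOpen U) {f g : (Fin d → ℝ) → F}
    (hf : ContDiffOn ℝ ∞ f U) (hg : ContDiffOn ℝ ∞ g U) (α : Fin d → ℕ) :
    ∀ x ∈ U, pdm α (f - g) x = pdm α f x - pdm α g x :=
  pdmL_sub_on hU hf hg α _

end Aux3
section Aux4

variable {d : ℕ} {F : Type*} [NormedAddCommGroup F] [NormedSpace ℝ F] [CompleteSpace F]

local notation "∞" => (⊤ : ℕ∞)

lemma continuous_update_line (x : Fin d → ℝ) (i : Fin d) :
    Continuous (fun t : ℝ => Function.update x i t) := by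
  have : (fun t : ℝ => Function.update x i t)
      = fun t : ℝ => x + (t - x i) • (Pi.single i 1 : Fin d → ℝ) := by
    funext t j
    rcases eq_or_ne j i with rfl | hj
    · simp
    · simp [Function.update_apply, hj, Pi.single_eq_of_ne hj]
  rw [this]
  exact continuous_const.add (((continuous_id.sub continuous_const).smul continuous_const))

lemma ftc_bound {f : (Fin d → ℝ) → F} (hf : ContDiff ℝ ∞ f)
    (hcs : HasCompactSupport f) (i : Fin d) (x : Fin d → ℝ) :
    (‖f x‖₊ : ℝ≥0∞) ≤ ∫⁻ t : ℝ, (‖pd i f (Function.update x i t)‖₊ : ℝ≥0∞) := by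
  obtain ⟨R, hR⟩ := isBounded_iff_forall_norm_le.mp hcs.isBounded
  set a : ℝ := -(|R| + |x i| + 1) with ha
  have hax : a ≤ x i := by
    have h1 := abs_nonneg R
    have h2 := neg_abs_le (x i)
    simp only [ha]
    linarith
  have hu0 : f (Function.update x i a) = 0 := by
    apply image_eq_zero_of_notMem_tsupport
    intro hmem
    have h1 : ‖Function.update x i a i‖ ≤ ‖Function.update x i a‖ :=
      norm_le_pi_norm (Function.update x i a) i
    rw [Function.update_self] at h1
    have h2 : ‖Function.update x i a‖ ≤ R := hR _ hmem
    have h3 : ‖a‖ = |R| + |x i| + 1 := by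
      rw [Real.norm_eq_abs, ha, abs_neg, abs_of_nonneg (by positivity)]
    have h4 := le_abs_self R
    have h5 := abs_nonneg (x i)
    linarith
  have hL : ∀ t : ℝ, HasDerivAt (fun t : ℝ => Function.update x i t)
      (Pi.single i 1 : Fin d → ℝ) t := by
    intro t
    have heq : (fun t : ℝ => Function.update x i t)
        = fun t : ℝ => x + (t - x i) • (Pi.single i 1 : Fin d → ℝ) := by
      funext t j
      rcases eq_or_ne j i with rfl | hj
      · simp
      · simp [Function.update_apply, hj, Pi.single_eq_of_ne hj]
    rw [heq]
    have h1 : HasDerivAt (fun t : ℝ => t - x i) 1 t := (hasDerivAt_id t).sub_const (x i)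
    have h2 := h1.smul_const (Pi.single i 1 : Fin d → ℝ)
    simpa using h2.const_add x
  have hu : ∀ t : ℝ, HasDerivAt (fun t => f (Function.update x i t))
      (pd i f (Function.update x i t)) t := by
    intro t
    have hfd : HasFDerivAt f (fderiv ℝ f (Function.update x i t)) (Function.update x i t) :=
      (hf.differentiable (by simp) _).hasFDerivAt
    exact hfd.comp_hasDerivAt t (hL t)
  have hcont : Continuous fun t => pd i f (Function.update x i t) :=
    ((contDiff_pd hf i).continuous).comp (continuous_update_line x i)
  have hInt : IntervalIntegrable (fun t => pd i f (Function.update x i t)) volume a (x i) :=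
    hcont.intervalIntegrable a (x i)
  have hftc := intervalIntegral.integral_eq_sub_of_hasDerivAt
    (f := fun t => f (Function.update x i t)) (fun t _ => hu t) hInt
  rw [show f (Function.update x i (x i)) = f x from by rw [Function.update_eq_self],
    hu0, sub_zero] at hftc
  rw [← hftc, intervalIntegral.integral_of_le hax]
  calc (‖∫ t in Set.Ioc a (x i), pd i f (Function.update x i t)‖₊ : ℝ≥0∞)
      ≤ ∫⁻ t in Set.Ioc a (x i), (‖pd i f (Function.update x i t)‖₊ : ℝ≥0∞) :=
        enorm_integral_le_lintegral_enorm _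
    _ ≤ _ := setLIntegral_le_lintegral _ _

omit [NormedSpace ℝ F] [CompleteSpace F] in
lemma measurable_ennnorm_comp {g : (Fin d → ℝ) → F} (hg : Continuous g) :
    Measurable fun y => (‖g y‖₊ : ℝ≥0∞) :=
  measurable_coe_nnreal_ennreal.comp hg.nnnorm.measurable

lemma main_list (l : List (Fin d)) (hl : l.Nodup) {f : (Fin d → ℝ) → F}
    (hf : ContDiff ℝ ∞ f) (hcs : HasCompactSupport f) (x : Fin d → ℝ) :
    (‖f x‖₊ : ℝ≥0∞) ≤ MeasureTheory.lmarginal (fun _ : Fin d => (volume : Measure ℝ))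
      l.toFinset (fun y => (‖pdm (fun j => if j ∈ l then 1 else 0) f y‖₊ : ℝ≥0∞)) x := by
  induction l generalizing x with
  | nil =>
    rw [List.toFinset_nil, MeasureTheory.lmarginal_empty]
    have : pdm (fun j : Fin d => if j ∈ ([] : List (Fin d)) then 1 else 0) f = f := by
      rw [pdm_eq_pdmL]
      exact pdmL_of_zero _ (fun j _ => by simp) f
    rw [this]
  | cons i t ih =>
    rcases List.nodup_cons.mp hl with ⟨hit, ht⟩
    have hkey : pdm (fun j => if j ∈ i :: t then 1 else 0) f
        = pd i (pdm (fun j => if j ∈ t then 1 else 0) f) := by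
      have hχ : (fun j => if j ∈ i :: t then 1 else 0)
          = Pi.single i 1 + fun j => if j ∈ t then (1:ℕ) else 0 := by
        funext j
        rcases eq_or_ne j i with rfl | hj
        · simp [if_neg hit]
        · simp [List.mem_cons, hj, Pi.single_eq_of_ne hj]
      rw [hχ, pdm_add hf, pdm_single_one]
    have hsm : ContDiff ℝ ∞ (pdm (fun j => if j ∈ t then 1 else 0) f) := contDiff_pdm hf _
    have hcssub : HasCompactSupport (pdm (fun j => if j ∈ t then 1 else 0) f) :=
      hasCompactSupport_pdm hcs _
    have hpt : ∀ y, (‖pdm (fun j => if j ∈ t then 1 else 0) f y‖₊ : ℝ≥0∞)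
        ≤ MeasureTheory.lmarginal (fun _ : Fin d => (volume : Measure ℝ)) {i}
          (fun z => (‖pdm (fun j => if j ∈ i :: t then 1 else 0) f z‖₊ : ℝ≥0∞)) y := by
      intro y
      rw [MeasureTheory.lmarginal_singleton]
      calc (‖pdm (fun j => if j ∈ t then 1 else 0) f y‖₊ : ℝ≥0∞)
          ≤ ∫⁻ s : ℝ, (‖pd i (pdm (fun j => if j ∈ t then 1 else 0) f)
              (Function.update y i s)‖₊ : ℝ≥0∞) := ftc_bound hsm hcssub i y
        _ = _ := by rw [hkey]
    have hmeas : Measurable fun z =>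
        (‖pdm (fun j => if j ∈ i :: t then 1 else 0) f z‖₊ : ℝ≥0∞) :=
      measurable_ennnorm_comp (contDiff_pdm hf _).continuous
    calc (‖f x‖₊ : ℝ≥0∞)
        ≤ MeasureTheory.lmarginal (fun _ : Fin d => (volume : Measure ℝ)) t.toFinset
            (fun y => (‖pdm (fun j => if j ∈ t then 1 else 0) f y‖₊ : ℝ≥0∞)) x := ih ht x
      _ ≤ MeasureTheory.lmarginal (fun _ : Fin d => (volume : Measure ℝ)) t.toFinset
            (MeasureTheory.lmarginal (fun _ : Fin d => (volume : Measure ℝ)) {i}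
              (fun z => (‖pdm (fun j => if j ∈ i :: t then 1 else 0) f z‖₊ : ℝ≥0∞))) x :=
          MeasureTheory.lmarginal_mono (fun y => hpt y) x
      _ = MeasureTheory.lmarginal (fun _ : Fin d => (volume : Measure ℝ))
            (t.toFinset ∪ {i})
            (fun z => (‖pdm (fun j => if j ∈ i :: t then 1 else 0) f z‖₊ : ℝ≥0∞)) x := by
          rw [MeasureTheory.lmarginal_union _ _ hmeas
            (Finset.disjoint_singleton_right.mpr (by simp [hit]))]
      _ = _ := by
          congr 1
          rw [List.toFinset_cons, Finset.insert_eq, Finset.union_comm]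

lemma main_bound {f : (Fin d → ℝ) → F} (hf : ContDiff ℝ ∞ f) (hcs : HasCompactSupport f)
    (x : Fin d → ℝ) :
    (‖f x‖₊ : ℝ≥0∞) ≤ ∫⁻ y, (‖pdm (fun _ => 1) f y‖₊ : ℝ≥0∞) := by
  have h := main_list (List.finRange d) (List.nodup_finRange d) hf hcs x
  rw [List.toFinset_finRange, MeasureTheory.lmarginal_univ] at h
  have hχ : (fun j : Fin d => if j ∈ List.finRange d then 1 else 0) = fun _ : Fin d => (1:ℕ) := by
    funext j; simp [List.mem_finRange]
  rw [hχ] at h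
  rw [show (volume : Measure (Fin d → ℝ)) = MeasureTheory.Measure.pi fun _ => volume from
    MeasureTheory.volume_pi]
  exact h

end Aux4
section Aux5

variable {d : ℕ}

lemma toReal_one_le {p : ℝ≥0∞} (hp1 : 1 ≤ p) (hp2 : p ≠ ⊤) : 1 ≤ p.toReal := by
  rw [← ENNReal.toReal_one]
  exact ENNReal.toReal_mono hp2 hp1

lemma toReal_pos' {p : ℝ≥0∞} (hp1 : 1 ≤ p) (hp2 : p ≠ ⊤) : 0 < p.toReal :=
  lt_of_lt_of_le one_pos (toReal_one_le hp1 hp2)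

lemma ennreal_pow_rpow_comm (a : ℝ≥0∞) (n : ℕ) (r : ℝ) : (a ^ n) ^ r = (a ^ r) ^ n := by
  rw [← ENNReal.rpow_natCast a n, ← ENNReal.rpow_mul, mul_comm, ENNReal.rpow_mul,
    ENNReal.rpow_natCast]

lemma le_seqLpNorm {ι : Type*} {p : ℝ≥0∞} (hp1 : 1 ≤ p) (hp2 : p ≠ ⊤) (t : ι → ℝ≥0∞) (γ : ι) :
    t γ ≤ seqLpNorm p t := by
  have hr0 : 0 < p.toReal := toReal_pos' hp1 hp2
  rw [seqLpNorm, if_neg hp2]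
  have h1 : t γ ^ p.toReal ≤ ∑' γ', t γ' ^ p.toReal := ENNReal.le_tsum γ
  have h2 := ENNReal.rpow_le_rpow h1 (by positivity : (0:ℝ) ≤ 1 / p.toReal)
  rwa [← ENNReal.rpow_mul, mul_one_div, div_self (ne_of_gt hr0), ENNReal.rpow_one] at h2

lemma seqLpNorm_le_aux {ι : Type*} {p : ℝ≥0∞} (hp1 : 1 ≤ p) (hp2 : p ≠ ⊤)
    {t c : ι → ℝ≥0∞} {M : ℝ≥0∞} (hb : ∀ γ, t γ ≤ c γ * M) :
    seqLpNorm p t ≤ (∑' γ, c γ ^ p.toReal) ^ (1 / p.toReal) * M := by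
  have hr0 : 0 < p.toReal := toReal_pos' hp1 hp2
  have hrn : (0:ℝ) ≤ p.toReal := le_of_lt hr0
  rw [seqLpNorm, if_neg hp2]
  calc (∑' γ, t γ ^ p.toReal) ^ (1 / p.toReal)
      ≤ (∑' γ, (c γ * M) ^ p.toReal) ^ (1 / p.toReal) :=
        ENNReal.rpow_le_rpow (ENNReal.tsum_le_tsum fun γ =>
          ENNReal.rpow_le_rpow (hb γ) hrn) (by positivity)
    _ = ((∑' γ, c γ ^ p.toReal) * M ^ p.toReal) ^ (1 / p.toReal) := by
        simp_rw [ENNReal.mul_rpow_of_nonneg _ _ hrn]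
        rw [ENNReal.tsum_mul_right]
    _ = (∑' γ, c γ ^ p.toReal) ^ (1 / p.toReal) * (M ^ p.toReal) ^ (1 / p.toReal) :=
        ENNReal.mul_rpow_of_nonneg _ _ (by positivity)
    _ = (∑' γ, c γ ^ p.toReal) ^ (1 / p.toReal) * M := by
        rw [← ENNReal.rpow_mul, mul_one_div, div_self (ne_of_gt hr0), ENNReal.rpow_one]

lemma seqLpNorm_add_le {ι : Type*} [Countable ι] [MeasurableSpace ι]
    [MeasurableSingletonClass ι] {p : ℝ≥0∞}
    (hp1 : 1 ≤ p) (t u : ι → ℝ≥0∞) :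
    seqLpNorm p (fun γ => t γ + u γ) ≤ seqLpNorm p t + seqLpNorm p u := by
  rcases eq_or_ne p ⊤ with rfl | hp2
  · simp only [seqLpNorm, if_pos rfl]
    exact iSup_le fun γ => add_le_add (le_iSup t γ) (le_iSup u γ)
  · simp only [seqLpNorm, if_neg hp2]
    have hr1 : 1 ≤ p.toReal := toReal_one_le hp1 hp2
    have h := ENNReal.lintegral_Lp_add_le
      (μ := MeasureTheory.Measure.count (α := ι)) (f := t) (g := u)
      (measurable_of_countable _).aemeasurable (measurable_of_countable _).aemeasurable hr1
    simp_rw [MeasureTheory.lintegral_count] at h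
    exact h

lemma tsum_pow_mOrder_lt_top : ∀ (d : ℕ) {a : ℝ≥0∞}, a < 1 →
    (∑' γ : Fin d → ℕ, a ^ mOrder γ) < ⊤ := by
  intro d
  induction d with
  | zero =>
    intro a _
    have h1 : (∑' γ : Fin 0 → ℕ, a ^ mOrder γ) = a ^ mOrder (fun i : Fin 0 => i.elim0) :=
      tsum_eq_single _ (fun b hb => absurd (Subsingleton.elim b _) hb)
    rw [h1]
    simp [mOrder]
  | succ d ih =>
    intro a ha
    rw [← Equiv.tsum_eq (Fin.consEquiv (fun _ : Fin (d+1) => ℕ))]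
    have h1 : ∀ q : ℕ × (Fin d → ℕ),
        a ^ mOrder (Fin.consEquiv (fun _ : Fin (d+1) => ℕ) q) = a ^ q.1 * a ^ mOrder q.2 := by
      rintro ⟨n, γ⟩
      have he : Fin.consEquiv (fun _ : Fin (d+1) => ℕ) (n, γ) = Fin.cons n γ := rfl
      have hm : mOrder (Fin.cons n γ : Fin (d+1) → ℕ) = n + mOrder γ := by
        simp [mOrder, Fin.sum_cons]
      rw [he, hm, pow_add]
    simp_rw [h1]
    rw [ENNReal.tsum_prod (f := fun (n : ℕ) (γ : Fin d → ℕ) => a ^ n * a ^ mOrder γ)]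
    simp_rw [ENNReal.tsum_mul_left]
    rw [ENNReal.tsum_mul_right, ENNReal.tsum_geometric]
    apply ENNReal.mul_lt_top
    · rw [ENNReal.inv_lt_top]
      exact tsub_pos_iff_lt.mpr ha
    · exact ih ha

lemma mFact_pos (β : Fin d → ℕ) : 0 < mFact β :=
  Finset.prod_pos fun i _ => Nat.factorial_pos _

lemma mOrder_add_one (β : Fin d → ℕ) : mOrder (β + fun _ => 1) = mOrder β + d := by
  simp only [mOrder, Pi.add_apply]
  rw [Finset.sum_add_distrib]
  simp

lemma mFact_add_one (β : Fin d → ℕ) :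
    mFact (β + fun _ => 1) = mFact β * ∏ i, (β i + 1) := by
  simp only [mFact, Pi.add_apply]
  rw [← Finset.prod_mul_distrib]
  exact Finset.prod_congr rfl fun i _ => by rw [Nat.factorial_succ]; ring

lemma prod_succ_le_two_pow (β : Fin d → ℕ) : (∏ i, (β i + 1)) ≤ 2 ^ mOrder β := by
  rw [mOrder, ← Finset.prod_pow_eq_pow_sum]
  exact Finset.prod_le_prod' fun i _ => Nat.succ_le_of_lt Nat.lt_two_pow_self

lemma weight_ineq {s h : ℝ} (hs : 1 < s) (hh : 0 < h) (β : Fin d → ℕ) :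
    h ^ mOrder β / (mFact β : ℝ) ^ s
      ≤ (1 / ((2:ℝ) ^ s * h)) ^ d *
        (((2:ℝ) ^ s * h) ^ mOrder (β + fun _ => 1) / (mFact (β + fun _ => 1) : ℝ) ^ s) := by
  have hs0 : (0:ℝ) ≤ s := le_of_lt (lt_trans one_pos hs)
  have h2s : (0:ℝ) < (2:ℝ) ^ s := Real.rpow_pos_of_pos two_pos s
  have hH : (0:ℝ) < (2:ℝ) ^ s * h := mul_pos h2s hh
  have hA : (0:ℝ) < (mFact β : ℝ) := Nat.cast_pos.mpr (mFact_pos β)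
  have hPpos : (0:ℝ) < ((∏ i, (β i + 1) : ℕ) : ℝ) :=
    Nat.cast_pos.mpr (Finset.prod_pos fun i _ => Nat.succ_pos _)
  rw [mOrder_add_one, mFact_add_one, Nat.cast_mul,
    Real.mul_rpow (le_of_lt hA) (le_of_lt hPpos), pow_add]
  set H : ℝ := (2:ℝ) ^ s * h with hHdef
  set n : ℕ := mOrder β with hn
  set P : ℕ := ∏ i, (β i + 1) with hP
  have hPle : (P:ℝ) ^ s ≤ ((2:ℝ) ^ s) ^ n := by
    have h1 : (P:ℝ) ≤ (2:ℝ) ^ n := by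
      have h2 := prod_succ_le_two_pow β
      rw [← hP, ← hn] at h2
      exact_mod_cast h2
    calc (P:ℝ) ^ s ≤ ((2:ℝ) ^ n) ^ s :=
          Real.rpow_le_rpow (le_of_lt hPpos) h1 hs0
      _ = ((2:ℝ) ^ s) ^ n := by
          rw [← Real.rpow_natCast (2:ℝ) n, ← Real.rpow_mul (by norm_num : (0:ℝ) ≤ 2),
            mul_comm (n:ℝ) s, Real.rpow_mul (by norm_num : (0:ℝ) ≤ 2), Real.rpow_natCast]
  have hH0 : H ≠ 0 := ne_of_gt hH
  have hcancel : (1 / H) ^ d * (H ^ n * H ^ d) = H ^ n := by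
    have e1 : (1 / H) ^ d * (H ^ n * H ^ d) = H ^ n * ((1 / H) ^ d * H ^ d) := by ring
    rw [e1, one_div, inv_pow, inv_mul_cancel₀ (pow_ne_zero d hH0), mul_one]
  rw [mul_div_assoc', div_le_div_iff₀ (by positivity) (by positivity), hcancel, hHdef, mul_pow]
  have h1 : h ^ n * (mFact β : ℝ) ^ s * (P:ℝ) ^ s
      ≤ h ^ n * (mFact β : ℝ) ^ s * ((2:ℝ) ^ s) ^ n :=
    mul_le_mul_of_nonneg_left hPle (by positivity)
  nlinarith [h1]

end Aux5
section Aux6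

variable {d : ℕ}

local notation "∞" => (⊤ : ℕ∞)

lemma rpow_le_add_one (x : ℝ≥0∞) {e : ℝ} (he0 : 0 ≤ e) (he1 : e ≤ 1) : x ^ e ≤ x + 1 := by
  rcases le_total x 1 with hx | hx
  · exact le_trans (ENNReal.rpow_le_one hx he0) (by simp)
  · calc x ^ e ≤ x ^ (1:ℝ) := ENNReal.rpow_le_rpow_of_exponent_le hx he1
      _ = x := ENNReal.rpow_one x
      _ ≤ x + 1 := le_self_add

lemma wgt_pos {s h : ℝ} (hh : 0 < h) (β : Fin d → ℕ) :
    0 < ENNReal.ofReal (h ^ mOrder β / (mFact β : ℝ) ^ s) := by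
  apply ENNReal.ofReal_pos.mpr
  have h1 : (0:ℝ) < (mFact β : ℝ) := Nat.cast_pos.mpr (mFact_pos β)
  positivity

lemma le_gnorm_top {s h : ℝ} {U : Set (Fin d → ℝ)} (φ : (Fin d → ℝ) → ℂ) (β : Fin d → ℕ) :
    ENNReal.ofReal (h ^ mOrder β / (mFact β : ℝ) ^ s) *
      eLpNorm (pdm β φ) ⊤ (volume.restrict U) ≤ gNorm s h ⊤ U φ := by
  rw [gNorm, seqLpNorm, if_pos rfl]
  exact le_iSup (fun α : Fin d → ℕ => ENNReal.ofReal (h ^ mOrder α / (mFact α : ℝ) ^ s) *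
    eLpNorm (pdm α φ) ⊤ (volume.restrict U)) β

lemma key_pointwise {s h : ℝ} (hs : 1 < s) (hh : 0 < h) {p : ℝ≥0∞} (hp1 : 1 ≤ p) (hp2 : p ≠ ⊤)
    {U : Set (Fin d → ℝ)} (hUm : MeasurableSet U) {ψ : (Fin d → ℝ) → ℂ}
    (hsm : ContDiff ℝ ∞ ψ) (hcs : HasCompactSupport ψ) (hsupp : tsupport ψ ⊆ U)
    (β : Fin d → ℕ) (x : Fin d → ℝ) :
    ENNReal.ofReal (h ^ mOrder β / (mFact β : ℝ) ^ s) * (‖pdm β ψ x‖₊ : ℝ≥0∞)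
      ≤ ((volume U + 1) * ENNReal.ofReal ((1 / ((2:ℝ) ^ s * h)) ^ d)) *
        gNorm s ((2:ℝ) ^ s * h) p U ψ := by
  have hr0 : 0 < p.toReal := toReal_pos' hp1 hp2
  have hr1 : 1 ≤ p.toReal := toReal_one_le hp1 hp2
  set H : ℝ := (2:ℝ) ^ s * h with hHdef
  have hH : 0 < H := mul_pos (Real.rpow_pos_of_pos two_pos s) hh
  set γ : Fin d → ℕ := β + fun _ => 1 with hγ
  set g : (Fin d → ℝ) → ℂ := pdm γ ψ with hg
  -- step 0 : pointwise bound by the total integral of the higher derivative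
  have hcomb : pdm (fun _ : Fin d => 1) (pdm β ψ) = g := by
    rw [← pdm_add hsm, hg]
    have e1 : ((fun _ : Fin d => 1) + β) = γ := by
      funext j
      simp [hγ, Nat.add_comm]
    rw [e1]
  have h1 : (‖pdm β ψ x‖₊ : ℝ≥0∞) ≤ ∫⁻ y, (‖g y‖₊ : ℝ≥0∞) := by
    have := main_bound (contDiff_pdm hsm β) (hasCompactSupport_pdm hcs β) x
    rwa [hcomb] at this
  -- step 1 : the integral is over U
  have h2 : (∫⁻ y, (‖g y‖₊ : ℝ≥0∞)) = ∫⁻ y in U, (‖g y‖₊ : ℝ≥0∞) := by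
    rw [← lintegral_indicator hUm]
    congr 1
    refine (Set.indicator_eq_self.mpr ?_).symm
    intro y hy
    have hgy : g y ≠ 0 := by
      simp only [Function.mem_support] at hy
      intro h0
      apply hy
      rw [h0]
      simp
    have : y ∈ tsupport g := subset_closure hgy
    exact hsupp ((tsupport_pdm_subset ψ γ) this)
  -- step 2/3 : L¹ ≤ Lᵖ · |U|^(1-1/p)
  have h3 : (∫⁻ y in U, (‖g y‖₊ : ℝ≥0∞))
      = eLpNorm g 1 (volume.restrict U) := by
    rw [eLpNorm_one_eq_lintegral_enorm]; rfl
  have h4 : eLpNorm g 1 (volume.restrict U)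
      ≤ eLpNorm g p (volume.restrict U) * (volume U) ^ (1 - 1 / p.toReal) := by
    have := eLpNorm_le_eLpNorm_mul_rpow_measure_univ (p := 1) (q := p) hp1
      ((contDiff_pdm hsm γ).continuous.aestronglyMeasurable (μ := volume.restrict U))
    simpa [Measure.restrict_apply_univ, ENNReal.toReal_one] using this
  have h5 : (volume U) ^ (1 - 1 / p.toReal) ≤ volume U + 1 :=
    rpow_le_add_one _ (by
      have : 1 / p.toReal ≤ 1 := by
        rw [div_le_one hr0]; exact hr1
      linarith) (by
      have : 0 ≤ 1 / p.toReal := by positivity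
      linarith)
  -- weights
  have hw : ENNReal.ofReal (h ^ mOrder β / (mFact β : ℝ) ^ s)
      ≤ ENNReal.ofReal ((1 / H) ^ d) * ENNReal.ofReal (H ^ mOrder γ / (mFact γ : ℝ) ^ s) := by
    rw [← ENNReal.ofReal_mul (by positivity)]
    exact ENNReal.ofReal_le_ofReal (weight_ineq hs hh β)
  have hterm : ENNReal.ofReal (H ^ mOrder γ / (mFact γ : ℝ) ^ s) *
      eLpNorm g p (volume.restrict U) ≤ gNorm s H p U ψ :=
    le_seqLpNorm hp1 hp2 (fun α => ENNReal.ofReal (H ^ mOrder α / (mFact α : ℝ) ^ s) *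
      eLpNorm (pdm α ψ) p (volume.restrict U)) γ
  calc ENNReal.ofReal (h ^ mOrder β / (mFact β : ℝ) ^ s) * (‖pdm β ψ x‖₊ : ℝ≥0∞)
      ≤ ENNReal.ofReal (h ^ mOrder β / (mFact β : ℝ) ^ s) *
          (eLpNorm g p (volume.restrict U) * (volume U) ^ (1 - 1 / p.toReal)) :=
        mul_le_mul_right (h1.trans ((h2.trans h3).le.trans h4)) _
    _ ≤ (ENNReal.ofReal ((1 / H) ^ d) * ENNReal.ofReal (H ^ mOrder γ / (mFact γ : ℝ) ^ s)) *
          (eLpNorm g p (volume.restrict U) * (volume U + 1)) :=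
        mul_le_mul' hw (mul_le_mul_right h5 _)
    _ = ((volume U + 1) * ENNReal.ofReal ((1 / H) ^ d)) *
          (ENNReal.ofReal (H ^ mOrder γ / (mFact γ : ℝ) ^ s) *
            eLpNorm g p (volume.restrict U)) := by ring
    _ ≤ ((volume U + 1) * ENNReal.ofReal ((1 / H) ^ d)) * gNorm s H p U ψ :=
        mul_le_mul_right hterm _

lemma gnorm_top_le {s h : ℝ} {U : Set (Fin d → ℝ)} (hh : 0 < h) (hUm : MeasurableSet U)
    {φ : (Fin d → ℝ) → ℂ} {B : ℝ≥0∞}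
    (hb : ∀ β : Fin d → ℕ, ∀ᵐ x ∂(volume.restrict U),
      ENNReal.ofReal (h ^ mOrder β / (mFact β : ℝ) ^ s) * (‖pdm β φ x‖₊ : ℝ≥0∞) ≤ B) :
    gNorm s h ⊤ U φ ≤ B := by
  rw [gNorm, seqLpNorm, if_pos rfl]
  apply iSup_le
  intro β
  set w : ℝ≥0∞ := ENNReal.ofReal (h ^ mOrder β / (mFact β : ℝ) ^ s) with hwdef
  have hw0 : w ≠ 0 := ne_of_gt (wgt_pos hh β)
  have hwt : w ≠ ⊤ := ENNReal.ofReal_ne_top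
  have hess : eLpNorm (pdm β φ) ⊤ (volume.restrict U) ≤ w⁻¹ * B := by
    rw [eLpNorm_exponent_top, eLpNormEssSup]
    refine essSup_le_of_ae_le _ ?_
    filter_upwards [hb β] with x hx
    calc (‖pdm β φ x‖₊ : ℝ≥0∞) = w⁻¹ * (w * (‖pdm β φ x‖₊ : ℝ≥0∞)) := by
          rw [← mul_assoc, ENNReal.inv_mul_cancel hw0 hwt, one_mul]
      _ ≤ w⁻¹ * B := mul_le_mul_right hx _
  calc w * eLpNorm (pdm β φ) ⊤ (volume.restrict U) ≤ w * (w⁻¹ * B) := mul_le_mul_right hess _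
    _ = B := by rw [← mul_assoc, ENNReal.mul_inv_cancel hw0 hwt, one_mul]

lemma seqLpNorm_mono {ι : Type*} (p : ℝ≥0∞) {t u : ι → ℝ≥0∞} (h : ∀ i, t i ≤ u i) :
    seqLpNorm p t ≤ seqLpNorm p u := by
  rcases eq_or_ne p ⊤ with rfl | hp
  · simp only [seqLpNorm, if_pos rfl]
    exact iSup_mono h
  · simp only [seqLpNorm, if_neg hp]
    exact ENNReal.rpow_le_rpow (ENNReal.tsum_le_tsum fun i =>
      ENNReal.rpow_le_rpow (h i) ENNReal.toReal_nonneg) (by positivity)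

lemma gNorm_le_add {s h : ℝ} {p : ℝ≥0∞} (hp1 : 1 ≤ p) {U : Set (Fin d → ℝ)}
    (hUm : MeasurableSet U) {f g₁ g₂ : (Fin d → ℝ) → ℂ}
    (hdec : ∀ γ : Fin d → ℕ, ∀ x ∈ U, pdm γ f x = pdm γ g₁ x + pdm γ g₂ x)
    (hm1 : ∀ γ : Fin d → ℕ, AEStronglyMeasurable (pdm γ g₁) (volume.restrict U))
    (hm2 : ∀ γ : Fin d → ℕ, AEStronglyMeasurable (pdm γ g₂) (volume.restrict U)) :
    gNorm s h p U f ≤ gNorm s h p U g₁ + gNorm s h p U g₂ := by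
  have step1 : ∀ γ : Fin d → ℕ,
      eLpNorm (pdm γ f) p (volume.restrict U)
        ≤ eLpNorm (pdm γ g₁) p (volume.restrict U) + eLpNorm (pdm γ g₂) p (volume.restrict U) := by
    intro γ
    have hae : pdm γ f =ᶠ[ae (volume.restrict U)] (pdm γ g₁ + pdm γ g₂) :=
      (ae_restrict_iff' hUm).mpr (Filter.Eventually.of_forall fun x hx => by
        rw [hdec γ x hx]; rfl)
    rw [eLpNorm_congr_ae hae]
    exact eLpNorm_add_le (hm1 γ) (hm2 γ) hp1
  calc gNorm s h p U f
      ≤ seqLpNorm p (fun γ : Fin d → ℕ =>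
          ENNReal.ofReal (h ^ mOrder γ / (mFact γ : ℝ) ^ s) *
            eLpNorm (pdm γ g₁) p (volume.restrict U) +
          ENNReal.ofReal (h ^ mOrder γ / (mFact γ : ℝ) ^ s) *
            eLpNorm (pdm γ g₂) p (volume.restrict U)) := by
        apply seqLpNorm_mono
        intro γ
        rw [← mul_add]
        exact mul_le_mul_right (step1 γ) _
    _ ≤ _ := seqLpNorm_add_le hp1 _ _

lemma gNorm_sub_comm {s h : ℝ} {p : ℝ≥0∞} {U : Set (Fin d → ℝ)} (f g : (Fin d → ℝ) → ℂ) :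
    gNorm s h p U (f - g) = gNorm s h p U (g - f) := by
  unfold gNorm
  congr 1
  funext α
  rw [show f - g = -(g - f) from (neg_sub g f).symm, pdm_neg, eLpNorm_neg]

end Aux6
section Aux7

variable {d : ℕ}

local notation "∞" => (⊤ : ℕ∞)

lemma gnorm_p_le_infty {s h' : ℝ} {p : ℝ≥0∞} (hp1 : 1 ≤ p) (hp2 : p ≠ ⊤) (hh' : 0 < h')
    {U : Set (Fin d → ℝ)} {φ : (Fin d → ℝ) → ℂ}
    (hmeas : ∀ γ : Fin d → ℕ, AEStronglyMeasurable (pdm γ φ) (volume.restrict U)) :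
    gNorm s h' p U φ
      ≤ (∑' γ : Fin d → ℕ, ((ENNReal.ofReal (1/2)) ^ mOrder γ) ^ p.toReal) ^ (1/p.toReal)
        * ((volume U) ^ (1/p.toReal) * gNorm s (2*h') ⊤ U φ) := by
  apply seqLpNorm_le_aux hp1 hp2
  intro γ
  have hcomp : eLpNorm (pdm γ φ) p (volume.restrict U)
      ≤ eLpNorm (pdm γ φ) ⊤ (volume.restrict U) * (volume U) ^ (1/p.toReal) := by
    have := eLpNorm_le_eLpNorm_mul_rpow_measure_univ (p := p) (q := ⊤) le_top (hmeas γ)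
    simpa [Measure.restrict_apply_univ] using this
  have hF : (0:ℝ) < (mFact γ : ℝ) := Nat.cast_pos.mpr (mFact_pos γ)
  have hsplit : ENNReal.ofReal (h' ^ mOrder γ / (mFact γ:ℝ)^s)
      = ENNReal.ofReal (1/2) ^ mOrder γ *
        ENNReal.ofReal ((2*h') ^ mOrder γ / (mFact γ:ℝ)^s) := by
    rw [← ENNReal.ofReal_pow (by norm_num), ← ENNReal.ofReal_mul (by positivity)]
    congr 1
    rw [mul_div_assoc', ← mul_pow]
    norm_num
    rw [show (1/2 : ℝ) * (2 * h') = h' from by ring]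
  calc ENNReal.ofReal (h' ^ mOrder γ / (mFact γ:ℝ)^s) * eLpNorm (pdm γ φ) p (volume.restrict U)
      ≤ ENNReal.ofReal (h' ^ mOrder γ / (mFact γ:ℝ)^s) *
          (eLpNorm (pdm γ φ) ⊤ (volume.restrict U) * (volume U) ^ (1/p.toReal)) :=
        mul_le_mul_right hcomp _
    _ = ENNReal.ofReal (1/2) ^ mOrder γ *
          ((ENNReal.ofReal ((2*h') ^ mOrder γ / (mFact γ:ℝ)^s) *
            eLpNorm (pdm γ φ) ⊤ (volume.restrict U)) * (volume U) ^ (1/p.toReal)) := by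
        rw [hsplit]; ring
    _ ≤ ENNReal.ofReal (1/2) ^ mOrder γ *
          (gNorm s (2*h') ⊤ U φ * (volume U) ^ (1/p.toReal)) :=
        mul_le_mul_right (mul_le_mul_left (le_gnorm_top φ γ) _) _
    _ = ENNReal.ofReal (1/2) ^ mOrder γ * ((volume U) ^ (1/p.toReal) * gNorm s (2*h') ⊤ U φ) := by
        ring

lemma geom_const_lt_top {p : ℝ≥0∞} (hp1 : 1 ≤ p) (hp2 : p ≠ ⊤) :
    (∑' γ : Fin d → ℕ, ((ENNReal.ofReal (1/2)) ^ mOrder γ) ^ p.toReal) ^ (1/p.toReal) < ⊤ := by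
  have hr0 : 0 < p.toReal := toReal_pos' hp1 hp2
  have hb : (ENNReal.ofReal (1/2)) ^ p.toReal < 1 := by
    apply ENNReal.rpow_lt_one (by
      rw [← ENNReal.ofReal_one]
      exact ENNReal.ofReal_lt_ofReal_iff_of_nonneg (by norm_num) |>.mpr (by norm_num)) hr0
  have hsum : (∑' γ : Fin d → ℕ, ((ENNReal.ofReal (1/2)) ^ p.toReal) ^ mOrder γ) < ⊤ :=
    tsum_pow_mOrder_lt_top d hb
  have he : ∀ γ : Fin d → ℕ, ((ENNReal.ofReal (1/2)) ^ mOrder γ) ^ p.toReal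
      = ((ENNReal.ofReal (1/2)) ^ p.toReal) ^ mOrder γ := fun γ =>
    ennreal_pow_rpow_comm _ _ _
  rw [show (fun γ : Fin d → ℕ => ((ENNReal.ofReal (1/2)) ^ mOrder γ) ^ p.toReal)
      = (fun γ : Fin d → ℕ => ((ENNReal.ofReal (1/2)) ^ p.toReal) ^ mOrder γ) from funext he]
  exact ENNReal.rpow_lt_top_of_nonneg (by positivity) (ne_of_lt hsum)

lemma tsupport_sub_subset {α β : Type*} [TopologicalSpace α] [AddGroup β]
    (f g : α → β) : tsupport (f - g) ⊆ tsupport f ∪ tsupport g := by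
  apply closure_minimal
  · intro x hx
    rcases Function.support_sub f g hx with h | h
    · exact Or.inl (subset_closure h)
    · exact Or.inr (subset_closure h)
  · exact (isClosed_tsupport f).union (isClosed_tsupport g)

end Aux7
section Aux8

variable {d : ℕ}

local notation "∞" => (⊤ : ℕ∞)

lemma approx_bound {s h : ℝ} (hs : 1 < s) (hh : 0 < h) {p : ℝ≥0∞} (hp1 : 1 ≤ p) (hp2 : p ≠ ⊤)
    {U : Set (Fin d → ℝ)} (hU : IsOpen U) {φ ψ : (Fin d → ℝ) → ℂ}
    (hφ : MemD s ((2:ℝ) ^ s * h) p U φ)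
    (hψsm : ContDiff ℝ ∞ ψ) (hψcs : HasCompactSupport ψ) (hψsupp : tsupport ψ ⊆ U)
    {ε : ℝ} (hε : 0 < ε)
    (hclose : gNorm s ((2:ℝ) ^ s * h) p U (φ - ψ) < ENNReal.ofReal ε) :
    gNorm s h ⊤ U (φ - ψ)
      ≤ 2 * ((volume U + 1) * ENNReal.ofReal ((1 / ((2:ℝ) ^ s * h)) ^ d)) *
        ENNReal.ofReal ε := by
  have hUm : MeasurableSet U := hU.measurableSet
  have hp0 : p ≠ 0 := (zero_lt_one.trans_le hp1).ne'
  set H : ℝ := (2:ℝ) ^ s * h with hHdef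
  have hH : 0 < H := mul_pos (Real.rpow_pos_of_pos two_pos s) hh
  set K : ℝ≥0∞ := (volume U + 1) * ENNReal.ofReal ((1 / H) ^ d) with hKdef
  obtain ⟨hφs, hφfin, hφapp⟩ := hφ
  choose Ψ hΨt hΨc using fun m : ℕ => hφapp (ε / ((m : ℝ) + 1)) (by positivity)
  apply gnorm_top_le hh hUm
  intro β
  set wH : ℝ≥0∞ := ENNReal.ofReal (H ^ mOrder β / (mFact β : ℝ) ^ s) with hwHdef
  have hwH0 : wH ≠ 0 := ne_of_gt (wgt_pos hH β)
  have hwHt : wH ≠ ⊤ := ENNReal.ofReal_ne_top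
  have haesm : ∀ m : ℕ, AEStronglyMeasurable (pdm β (Ψ m)) (volume.restrict U) := fun m =>
    (contDiff_pdm (hΨt m).1 β).continuous.aestronglyMeasurable
  have haesg : AEStronglyMeasurable (pdm β φ) (volume.restrict U) :=
    ((contDiffOn_pdm hU hφs β).continuousOn).aestronglyMeasurable hUm
  have hbound : ∀ m : ℕ,
      eLpNorm ((fun x => pdm β (Ψ m) x) - pdm β φ) p (volume.restrict U)
        ≤ wH⁻¹ * ENNReal.ofReal (ε / ((m : ℝ) + 1)) := by
    intro m
    have he1 : eLpNorm ((fun x => pdm β (Ψ m) x) - pdm β φ) p (volume.restrict U)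
        = eLpNorm (pdm β (Ψ m - φ)) p (volume.restrict U) := by
      apply eLpNorm_congr_ae
      apply (ae_restrict_iff' hUm).mpr
      apply Filter.Eventually.of_forall
      intro x hx
      have := pdm_sub_on hU ((hΨt m).1.contDiffOn) hφs β x hx
      simp only [Pi.sub_apply]
      rw [this]
    have he2 : eLpNorm (pdm β (Ψ m - φ)) p (volume.restrict U)
        = eLpNorm (pdm β (φ - Ψ m)) p (volume.restrict U) := by
      rw [show Ψ m - φ = -(φ - Ψ m) from (neg_sub _ _).symm, pdm_neg, eLpNorm_neg]
    have he3 : wH * eLpNorm (pdm β (φ - Ψ m)) p (volume.restrict U)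
        ≤ gNorm s H p U (φ - Ψ m) :=
      le_seqLpNorm hp1 hp2 (fun α => ENNReal.ofReal (H ^ mOrder α / (mFact α : ℝ) ^ s) *
        eLpNorm (pdm α (φ - Ψ m)) p (volume.restrict U)) β
    rw [he1, he2]
    calc eLpNorm (pdm β (φ - Ψ m)) p (volume.restrict U)
        = wH⁻¹ * (wH * eLpNorm (pdm β (φ - Ψ m)) p (volume.restrict U)) := by
          rw [← mul_assoc, ENNReal.inv_mul_cancel hwH0 hwHt, one_mul]
      _ ≤ wH⁻¹ * gNorm s H p U (φ - Ψ m) := mul_le_mul_right he3 _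
      _ ≤ wH⁻¹ * ENNReal.ofReal (ε / ((m : ℝ) + 1)) := mul_le_mul_right (hΨc m).le _
  have hrhs : Filter.Tendsto (fun m : ℕ => wH⁻¹ * ENNReal.ofReal (ε / ((m : ℝ) + 1)))
      Filter.atTop (nhds 0) := by
    have h1 : Filter.Tendsto (fun m : ℕ => ε / ((m : ℝ) + 1)) Filter.atTop (nhds 0) := by
      have h2 := tendsto_one_div_add_atTop_nhds_zero_nat.const_mul ε
      simp only [mul_zero] at h2
      have he : (fun m : ℕ => ε / ((m : ℝ) + 1)) = fun m : ℕ => ε * (1 / ((m:ℝ)+1)) := by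
        funext m
        rw [mul_one_div]
      rw [he]
      exact h2
    have h3 := ENNReal.tendsto_ofReal h1
    rw [ENNReal.ofReal_zero] at h3
    have h4 := ENNReal.Tendsto.const_mul h3 (Or.inr (ENNReal.inv_ne_top.mpr hwH0))
    simpa using h4
  have htend0 : Filter.Tendsto
      (fun m : ℕ => eLpNorm ((fun x => pdm β (Ψ m) x) - pdm β φ) p (volume.restrict U))
      Filter.atTop (nhds 0) :=
    tendsto_of_tendsto_of_tendsto_of_le_of_le tendsto_const_nhds hrhs
      (fun m => by positivity) hbound
  have hmeasconv : TendstoInMeasure (volume.restrict U) (fun m => fun x => pdm β (Ψ m) x)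
      Filter.atTop (pdm β φ) :=
    tendstoInMeasure_of_tendsto_eLpNorm hp0 haesm haesg htend0
  obtain ⟨ns, hns, hae⟩ := hmeasconv.exists_seq_tendsto_ae
  filter_upwards [hae, MeasureTheory.ae_restrict_mem hUm] with x hx hxU
  set w : ℝ≥0∞ := ENNReal.ofReal (h ^ mOrder β / (mFact β : ℝ) ^ s) with hwdef
  have hxeq : pdm β (φ - ψ) x = pdm β φ x - pdm β ψ x :=
    pdm_sub_on hU hφs (hψsm.contDiffOn) β x hxU
  have hlim : Filter.Tendsto (fun k => pdm β (Ψ (ns k)) x - pdm β ψ x) Filter.atTop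
      (nhds (pdm β (φ - ψ) x)) := by
    rw [hxeq]
    exact hx.sub_const _
  have hlim2 : Filter.Tendsto (fun k => w * (‖pdm β (Ψ (ns k)) x - pdm β ψ x‖₊ : ℝ≥0∞))
      Filter.atTop (nhds (w * (‖pdm β (φ - ψ) x‖₊ : ℝ≥0∞))) := by
    have hn := hlim.nnnorm
    have hc := ENNReal.tendsto_coe.mpr hn
    exact ENNReal.Tendsto.const_mul hc (Or.inr ENNReal.ofReal_ne_top)
  apply le_of_tendsto hlim2
  apply Filter.Eventually.of_forall
  intro k
  have hξsm : ContDiff ℝ ∞ (Ψ (ns k) - ψ) := (hΨt (ns k)).1.sub hψsm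
  have hξcs : HasCompactSupport (Ψ (ns k) - ψ) :=
    IsCompact.of_isClosed_subset (((hΨt (ns k)).2.1).union hψcs) (isClosed_tsupport _)
      (tsupport_sub_subset _ _)
  have hξsupp : tsupport (Ψ (ns k) - ψ) ⊆ U :=
    (tsupport_sub_subset _ _).trans (Set.union_subset (hΨt (ns k)).2.2.1 hψsupp)
  have hξeq : pdm β (Ψ (ns k) - ψ) x = pdm β (Ψ (ns k)) x - pdm β ψ x := by
    rw [pdm_sub (hΨt (ns k)).1 hψsm]
    rfl
  rw [← hξeq]
  have hkp := key_pointwise hs hh hp1 hp2 hUm hξsm hξcs hξsupp β x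
  rw [← hHdef, ← hKdef, ← hwdef] at hkp
  have hdecomp : ∀ γ : Fin d → ℕ, ∀ y ∈ U,
      pdm γ (Ψ (ns k) - ψ) y = pdm γ (Ψ (ns k) - φ) y + pdm γ (φ - ψ) y := by
    intro γ y hy
    rw [pdm_sub (hΨt (ns k)).1 hψsm,
      pdm_sub_on hU ((hΨt (ns k)).1.contDiffOn) hφs γ y hy,
      pdm_sub_on hU hφs (hψsm.contDiffOn) γ y hy]
    simp only [Pi.sub_apply]
    ring
  have hm1 : ∀ γ : Fin d → ℕ,
      AEStronglyMeasurable (pdm γ (Ψ (ns k) - φ)) (volume.restrict U) := fun γ =>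
    ((contDiffOn_pdm hU (((hΨt (ns k)).1.contDiffOn).sub hφs) γ).continuousOn).aestronglyMeasurable
      hUm
  have hm2 : ∀ γ : Fin d → ℕ,
      AEStronglyMeasurable (pdm γ (φ - ψ)) (volume.restrict U) := fun γ =>
    ((contDiffOn_pdm hU (hφs.sub (hψsm.contDiffOn)) γ).continuousOn).aestronglyMeasurable hUm
  have htr : gNorm s H p U (Ψ (ns k) - ψ)
      ≤ gNorm s H p U (Ψ (ns k) - φ) + gNorm s H p U (φ - ψ) :=
    gNorm_le_add hp1 hUm hdecomp hm1 hm2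
  have hb1 : gNorm s H p U (Ψ (ns k) - φ) ≤ ENNReal.ofReal ε := by
    rw [gNorm_sub_comm]
    refine le_trans (hΨc (ns k)).le (ENNReal.ofReal_le_ofReal ?_)
    apply div_le_self hε.le
    have : (0:ℝ) ≤ (ns k : ℝ) := Nat.cast_nonneg _
    linarith
  have hb2 : gNorm s H p U (φ - ψ) ≤ ENNReal.ofReal ε := hclose.le
  calc w * (‖pdm β (Ψ (ns k) - ψ) x‖₊ : ℝ≥0∞)
      ≤ K * gNorm s H p U (Ψ (ns k) - ψ) := hkp
    _ ≤ K * (ENNReal.ofReal ε + ENNReal.ofReal ε) :=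
        mul_le_mul_right (htr.trans (add_le_add hb1 hb2)) _
    _ = 2 * K * ENNReal.ofReal ε := by ring
end Aux8
section Aux9

variable {d : ℕ}

local notation "∞" => (⊤ : ℕ∞)

lemma gnorm_infty_le_K {s h : ℝ} (hs : 1 < s) (hh : 0 < h) {p : ℝ≥0∞} (hp1 : 1 ≤ p)
    (hp2 : p ≠ ⊤) {U : Set (Fin d → ℝ)} (hU : IsOpen U) (hUb : Bornology.IsBounded U)
    {φ : (Fin d → ℝ) → ℂ} (hφ : MemD s ((2:ℝ) ^ s * h) p U φ) :
    gNorm s h ⊤ U φ ≤ ((volume U + 1) * ENNReal.ofReal ((1 / ((2:ℝ) ^ s * h)) ^ d)) *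
      gNorm s ((2:ℝ) ^ s * h) p U φ := by
  have hUm : MeasurableSet U := hU.measurableSet
  set H : ℝ := (2:ℝ) ^ s * h with hHdef
  have hH : 0 < H := mul_pos (Real.rpow_pos_of_pos two_pos s) hh
  set K : ℝ≥0∞ := (volume U + 1) * ENNReal.ofReal ((1 / H) ^ d) with hKdef
  have hKt : K ≠ ⊤ := ENNReal.mul_ne_top
    (ENNReal.add_ne_top.mpr ⟨(hUb.measure_lt_top).ne, ENNReal.one_ne_top⟩) ENNReal.ofReal_ne_top
  apply ENNReal.le_of_forall_pos_le_add
  intro ε' hε' _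
  set CR : ℝ := (3 * K).toReal + 1 with hCRdef
  have hCRpos : (0:ℝ) < CR := by positivity
  set ε : ℝ := (ε' : ℝ) / CR with hεdef
  have hεpos : 0 < ε := div_pos (by exact_mod_cast hε') hCRpos
  obtain ⟨ψ, hψt, hψc⟩ := hφ.2.2 ε hεpos
  have hA : gNorm s h ⊤ U (φ - ψ) ≤ 2 * K * ENNReal.ofReal ε := by
    have := approx_bound hs hh hp1 hp2 hU hφ hψt.1 hψt.2.1 hψt.2.2.1 hεpos hψc
    rw [← hHdef, ← hKdef] at this
    exact this
  have hdec1 : ∀ γ : Fin d → ℕ, ∀ x ∈ U, pdm γ φ x = pdm γ (φ - ψ) x + pdm γ ψ x := by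
    intro γ x hx
    rw [pdm_sub_on hU hφ.1 (hψt.1.contDiffOn) γ x hx]
    ring
  have hm1 : ∀ γ : Fin d → ℕ, AEStronglyMeasurable (pdm γ (φ - ψ)) (volume.restrict U) :=
    fun γ => ((contDiffOn_pdm hU (hφ.1.sub (hψt.1.contDiffOn)) γ).continuousOn
      ).aestronglyMeasurable hUm
  have hm2 : ∀ γ : Fin d → ℕ, AEStronglyMeasurable (pdm γ ψ) (volume.restrict U) :=
    fun γ => (contDiff_pdm hψt.1 γ).continuous.aestronglyMeasurable
  have hmφ : ∀ γ : Fin d → ℕ, AEStronglyMeasurable (pdm γ φ) (volume.restrict U) :=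
    fun γ => ((contDiffOn_pdm hU hφ.1 γ).continuousOn).aestronglyMeasurable hUm
  have htri : gNorm s h ⊤ U φ ≤ gNorm s h ⊤ U (φ - ψ) + gNorm s h ⊤ U ψ :=
    gNorm_le_add le_top hUm hdec1 hm1 hm2
  have hψbound : gNorm s h ⊤ U ψ ≤ K * gNorm s H p U ψ := by
    apply gnorm_top_le hh hUm
    intro β
    apply Filter.Eventually.of_forall
    intro x
    have := key_pointwise hs hh hp1 hp2 hUm hψt.1 hψt.2.1 hψt.2.2.1 β x
    rwa [← hHdef, ← hKdef] at this
  have hdec2 : ∀ γ : Fin d → ℕ, ∀ x ∈ U, pdm γ ψ x = pdm γ (ψ - φ) x + pdm γ φ x := by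
    intro γ x hx
    rw [pdm_sub_on hU (hψt.1.contDiffOn) hφ.1 γ x hx]
    ring
  have hm3 : ∀ γ : Fin d → ℕ, AEStronglyMeasurable (pdm γ (ψ - φ)) (volume.restrict U) :=
    fun γ => ((contDiffOn_pdm hU ((hψt.1.contDiffOn).sub hφ.1) γ).continuousOn
      ).aestronglyMeasurable hUm
  have hψtri : gNorm s H p U ψ ≤ gNorm s H p U (ψ - φ) + gNorm s H p U φ :=
    gNorm_le_add hp1 hUm hdec2 hm3 hmφ
  have hswap : gNorm s H p U (ψ - φ) ≤ ENNReal.ofReal ε := by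
    rw [gNorm_sub_comm]
    exact hψc.le
  have hmain : gNorm s h ⊤ U φ ≤ K * gNorm s H p U φ + 3 * K * ENNReal.ofReal ε := by
    calc gNorm s h ⊤ U φ ≤ gNorm s h ⊤ U (φ - ψ) + gNorm s h ⊤ U ψ := htri
      _ ≤ 2 * K * ENNReal.ofReal ε +
          K * (ENNReal.ofReal ε + gNorm s H p U φ) := by
          apply add_le_add hA
          exact hψbound.trans (mul_le_mul_right (hψtri.trans (add_le_add_left hswap _)) _)
      _ = K * gNorm s H p U φ + 3 * K * ENNReal.ofReal ε := by ring
  refine hmain.trans (add_le_add_right ?_ _)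
  have h3K : 3 * K ≤ ENNReal.ofReal CR := by
    have h1 : 3 * K ≠ ⊤ := ENNReal.mul_ne_top (by simp) hKt
    rw [← ENNReal.ofReal_toReal h1]
    apply ENNReal.ofReal_le_ofReal
    rw [hCRdef]
    linarith
  calc 3 * K * ENNReal.ofReal ε ≤ ENNReal.ofReal CR * ENNReal.ofReal ε :=
        mul_le_mul_left h3K _
    _ = ENNReal.ofReal (CR * ε) := (ENNReal.ofReal_mul hCRpos.le).symm
    _ = ENNReal.ofReal (ε' : ℝ) := by
        rw [hεdef, mul_div_cancel₀ _ (ne_of_gt hCRpos)]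
    _ = (ε' : ℝ≥0∞) := ENNReal.ofReal_coe_nnreal

lemma memD_top_of_memD_p {s h : ℝ} (hs : 1 < s) (hh : 0 < h) {p : ℝ≥0∞} (hp1 : 1 ≤ p)
    (hp2 : p ≠ ⊤) {U : Set (Fin d → ℝ)} (hU : IsOpen U) (hUb : Bornology.IsBounded U)
    {φ : (Fin d → ℝ) → ℂ} (hφ : MemD s ((2:ℝ) ^ s * h) p U φ) : MemD s h ⊤ U φ := by
  have hH : 0 < (2:ℝ) ^ s * h := mul_pos (Real.rpow_pos_of_pos two_pos s) hh
  set K : ℝ≥0∞ := (volume U + 1) * ENNReal.ofReal ((1 / ((2:ℝ) ^ s * h)) ^ d) with hKdef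
  have hKt : K ≠ ⊤ := ENNReal.mul_ne_top
    (ENNReal.add_ne_top.mpr ⟨(hUb.measure_lt_top).ne, ENNReal.one_ne_top⟩) ENNReal.ofReal_ne_top
  refine ⟨hφ.1, ?_, ?_⟩
  · calc gNorm s h ⊤ U φ ≤ K * gNorm s ((2:ℝ) ^ s * h) p U φ :=
          gnorm_infty_le_K hs hh hp1 hp2 hU hUb hφ
      _ < ⊤ := ENNReal.mul_lt_top hKt.lt_top hφ.2.1
  · intro ε hε
    set CR : ℝ := (2 * K).toReal + 1 with hCRdef
    have hCRpos : (0:ℝ) < CR := by positivity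
    set ε0 : ℝ := ε / (2 * CR) with hε0def
    have hε0pos : 0 < ε0 := by positivity
    obtain ⟨ψ, hψt, hψc⟩ := hφ.2.2 ε0 hε0pos
    refine ⟨ψ, hψt, ?_⟩
    have hA : gNorm s h ⊤ U (φ - ψ) ≤ 2 * K * ENNReal.ofReal ε0 := by
      have := approx_bound hs hh hp1 hp2 hU hφ hψt.1 hψt.2.1 hψt.2.2.1 hε0pos hψc
      rw [← hKdef] at this
      exact this
    have h2K : 2 * K ≤ ENNReal.ofReal CR := by
      have h1 : 2 * K ≠ ⊤ := ENNReal.mul_ne_top (by simp) hKt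
      rw [← ENNReal.ofReal_toReal h1]
      apply ENNReal.ofReal_le_ofReal
      rw [hCRdef]
      linarith
    calc gNorm s h ⊤ U (φ - ψ) ≤ 2 * K * ENNReal.ofReal ε0 := hA
      _ ≤ ENNReal.ofReal CR * ENNReal.ofReal ε0 := mul_le_mul_left h2K _
      _ = ENNReal.ofReal (CR * ε0) := (ENNReal.ofReal_mul hCRpos.le).symm
      _ = ENNReal.ofReal (ε / 2) := by
          rw [hε0def, show CR * (ε / (2 * CR)) = ε / 2 from by field_simp]
      _ < ENNReal.ofReal ε := by
          rw [ENNReal.ofReal_lt_ofReal_iff hε]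
          linarith

lemma memD_p_of_top {s h' : ℝ} (hh' : 0 < h') {p : ℝ≥0∞} (hp1 : 1 ≤ p) (hp2 : p ≠ ⊤)
    {U : Set (Fin d → ℝ)} (hU : IsOpen U) (hUb : Bornology.IsBounded U)
    {φ : (Fin d → ℝ) → ℂ} (hall : ∀ h0 : ℝ, 0 < h0 → MemD s h0 ⊤ U φ) :
    MemD s h' p U φ := by
  have hUm : MeasurableSet U := hU.measurableSet
  have h2h' : (0:ℝ) < 2 * h' := by linarith
  set Cgeo : ℝ≥0∞ :=
    (∑' γ : Fin d → ℕ, ((ENNReal.ofReal (1/2)) ^ mOrder γ) ^ p.toReal) ^ (1/p.toReal)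
    with hCgeodef
  have hCgeot : Cgeo ≠ ⊤ := (geom_const_lt_top hp1 hp2).ne
  set V : ℝ≥0∞ := (volume U) ^ (1/p.toReal) with hVdef
  have hVt : V ≠ ⊤ :=
    (ENNReal.rpow_lt_top_of_nonneg (by positivity) (hUb.measure_lt_top).ne).ne
  have hφs : ContDiffOn ℝ ∞ φ U := (hall h' hh').1
  have hmeas : ∀ γ : Fin d → ℕ, AEStronglyMeasurable (pdm γ φ) (volume.restrict U) :=
    fun γ => ((contDiffOn_pdm hU hφs γ).continuousOn).aestronglyMeasurable hUm
  refine ⟨hφs, ?_, ?_⟩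
  · calc gNorm s h' p U φ ≤ Cgeo * (V * gNorm s (2 * h') ⊤ U φ) :=
          gnorm_p_le_infty hp1 hp2 hh' hmeas
      _ < ⊤ := ENNReal.mul_lt_top hCgeot.lt_top
          (ENNReal.mul_lt_top hVt.lt_top (hall (2 * h') h2h').2.1)
  · intro ε hε
    set D : ℝ := (Cgeo * V).toReal + 1 with hDdef
    have hDpos : (0:ℝ) < D := by positivity
    set ε0 : ℝ := ε / (2 * D) with hε0def
    have hε0pos : 0 < ε0 := by positivity
    obtain ⟨ψ, hψt, hψc⟩ := (hall (2 * h') h2h').2.2 ε0 hε0pos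
    refine ⟨ψ, hψt, ?_⟩
    have hmeas2 : ∀ γ : Fin d → ℕ,
        AEStronglyMeasurable (pdm γ (φ - ψ)) (volume.restrict U) :=
      fun γ => ((contDiffOn_pdm hU (hφs.sub (hψt.1.contDiffOn)) γ).continuousOn
        ).aestronglyMeasurable hUm
    have hDle : Cgeo * V ≤ ENNReal.ofReal D := by
      have h1 : Cgeo * V ≠ ⊤ := ENNReal.mul_ne_top hCgeot hVt
      rw [← ENNReal.ofReal_toReal h1]
      apply ENNReal.ofReal_le_ofReal
      rw [hDdef]
      linarith
    calc gNorm s h' p U (φ - ψ) ≤ Cgeo * (V * gNorm s (2 * h') ⊤ U (φ - ψ)) :=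
          gnorm_p_le_infty hp1 hp2 hh' hmeas2
      _ ≤ Cgeo * (V * ENNReal.ofReal ε0) := mul_le_mul_right (mul_le_mul_right hψc.le _) _
      _ = (Cgeo * V) * ENNReal.ofReal ε0 := by ring
      _ ≤ ENNReal.ofReal D * ENNReal.ofReal ε0 := mul_le_mul_left hDle _
      _ = ENNReal.ofReal (D * ε0) := (ENNReal.ofReal_mul hDpos.le).symm
      _ = ENNReal.ofReal (ε / 2) := by
          rw [hε0def, show D * (ε / (2 * D)) = ε / 2 from by field_simp]
      _ < ENNReal.ofReal ε := by
          rw [ENNReal.ofReal_lt_ofReal_iff hε]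
          linarith

end Aux9

/-- Fix `s > 1`, a bounded open set `U ⊆ ℝ^d`, `1 ≤ p < ∞` and `h > 0`.
Then `D^{(s)}_{L^p,2^s h}(U) ⊆ D^{(s)}_{L^∞,h}(U)` with a continuous inclusion:
`sup_β h^{|β|}‖D^βφ‖_{L^∞}/β!^s ≤ C (∑_γ (2^s h)^{|γ|p}‖D^γφ‖_{L^p}^p/γ!^{ps})^{1/p}`.
Consequently the spaces `D^{(s)}_{L^p}(U)`, `1 ≤ p < ∞`, and `Ḃ^{(s)}(U)` are all
isomorphic to each other as locally convex spaces; in particular they coincide as sets. -/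
theorem statement_11 {d : ℕ} (s : ℝ) (hs : 1 < s)
    (U : Set (Fin d → ℝ)) (hU : IsOpen U) (hUb : Bornology.IsBounded U)
    (p : ℝ≥0∞) (hp1 : 1 ≤ p) (hp2 : p ≠ ∞)
    (h : ℝ) (hh : 0 < h) :
    (∀ φ : (Fin d → ℝ) → ℂ, MemD s ((2 : ℝ) ^ s * h) p U φ → MemD s h ∞ U φ) ∧
    (∃ C : ℝ, 0 < C ∧ ∀ φ : (Fin d → ℝ) → ℂ, MemD s ((2 : ℝ) ^ s * h) p U φ →
      gNorm s h ∞ U φ ≤ ENNReal.ofReal C * gNorm s ((2 : ℝ) ^ s * h) p U φ) ∧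
    (∀ φ : (Fin d → ℝ) → ℂ,
      (∀ h' : ℝ, 0 < h' → MemD s h' p U φ) ↔ (∀ h' : ℝ, 0 < h' → MemD s h' ∞ U φ)) := by
  refine ⟨?_, ?_, ?_⟩
  · intro φ hφ
    exact memD_top_of_memD_p hs hh hp1 hp2 hU hUb hφ
  · set K : ℝ≥0∞ := (volume U + 1) * ENNReal.ofReal ((1 / ((2:ℝ) ^ s * h)) ^ d) with hKdef
    have hKt : K ≠ ⊤ := ENNReal.mul_ne_top
      (ENNReal.add_ne_top.mpr ⟨(hUb.measure_lt_top).ne, ENNReal.one_ne_top⟩)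
      ENNReal.ofReal_ne_top
    refine ⟨K.toReal + 1, by positivity, ?_⟩
    intro φ hφ
    have h1 := gnorm_infty_le_K hs hh hp1 hp2 hU hUb hφ
    rw [← hKdef] at h1
    refine h1.trans (mul_le_mul_left ?_ _)
    conv_lhs => rw [← ENNReal.ofReal_toReal hKt]
    exact ENNReal.ofReal_le_ofReal (by linarith [ENNReal.toReal_nonneg (a := K)])
  · intro φ
    constructor
    · intro hall h' hh'
      exact memD_top_of_memD_p hs hh' hp1 hp2 hU hUb
        (hall ((2:ℝ) ^ s * h') (mul_pos (Real.rpow_pos_of_pos two_pos s) hh'))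
    · intro hall h' hh'
      exact memD_p_of_top hh' hp1 hp2 hU hUb hall
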